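/- arXiv:1802.04320 — 3 statements merged into one kernel-verified Lean document; each statement's English description precedes it below -/
import Mathlib

section
/- Let n ≥ 2 and let v ∈ S_n satisfy v ≤ c in the Bruhat order, where c = s_{n−1}s_{n−2}⋯s_2s_1. Then the Schubert ideal equals the degenerate Schubert ideal: I_v = J^a_v. Equivalently, for every Plücker relation R^k_{J,L}, the difference R^k_{J,L} − init(R^k_{J,L}) lies in the ideal ⟨p_I : I ≰ v([#I])⟩. -/
open Finset MvPolynomial

namespace DegSchubert

/-- The interval `[d] = {1,…,d}` (empty for `d = 0`). -/
def seg (d : ℕ) : Finset ℕ := Finset.Icc 1 d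

/-- Number of inversions of a list of naturals. -/
def inv : List ℕ → ℕ
  | [] => 0
  | a :: t => t.countP (fun b => decide (b < a)) + inv t

/-- Signed Plücker variable attached to a sequence: zero if two entries coincide,
otherwise the sign of the sorting permutation times the variable of the underlying set. -/
noncomputable def pseq (l : List ℕ) : MvPolynomial (Finset ℕ) ℂ :=
  if l.Nodup then ((-1 : ℂ) ^ inv l) • X l.toFinset else 0

/-- `J′`: replace the first `k` entries of `J` by the entries of `L` in the (0-indexed)
positions belonging to `R`, taken in increasing order. -/
def Jrep (J L : List ℕ) (k : ℕ) (R : Finset ℕ) : List ℕ :=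
  (R.sort (· ≤ ·)).map (fun r => L.getD r 0) ++ J.drop k

/-- `L′`: replace the entries of `L` in the (0-indexed) positions belonging to `R`
by the first `k` entries of `J`, in order. -/
def Lrep (L J : List ℕ) (R : Finset ℕ) : List ℕ :=
  (List.range L.length).map
    (fun p => if p ∈ R then J.getD ((R.filter (· < p)).card) 0 else L.getD p 0)

/-- The Plücker relation `R^k_{J,L}` (positions of `L` are 0-indexed). -/
noncomputable def pluecker (k : ℕ) (J L : List ℕ) : MvPolynomial (Finset ℕ) ℂ :=
  pseq J * pseq L -
    ∑ R ∈ (Finset.range L.length).powersetCard k, pseq (Jrep J L k R) * pseq (Lrep L J R)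

/-- Validity of the data `(k, J, L)` of a Plücker relation for `S_n`. -/
def ValidPair (n k : ℕ) (J L : List ℕ) : Prop :=
  J.Nodup ∧ L.Nodup ∧ (∀ a ∈ J, a ∈ seg n) ∧ (∀ a ∈ L, a ∈ seg n) ∧
    1 ≤ J.length ∧ J.length ≤ L.length ∧ L.length ≤ n - 1 ∧ 1 ≤ k ∧ k ≤ J.length

/-- Weight of a Plücker variable. -/
def wt (n : ℕ) (I : Finset ℕ) : ℕ := (I.filter (fun r => I.card ≤ r ∧ r ≤ n - 1)).card

/-- Weight of a monomial. -/
def mwt (n : ℕ) (m : Finset ℕ →₀ ℕ) : ℕ := m.sum (fun I e => e * wt n I)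

/-- The initial form of a polynomial: the sum of its terms of minimal weight. -/
noncomputable def initw (n : ℕ) (f : MvPolynomial (Finset ℕ) ℂ) : MvPolynomial (Finset ℕ) ℂ :=
  ∑ m ∈ f.support.filter (fun m => ∀ m' ∈ f.support, mwt n m ≤ mwt n m'),
    monomial m (f.coeff m)

/-- The componentwise ("dominance") order on finsets of naturals of equal size. -/
def domLE (A B : Finset ℕ) : Prop :=
  List.Forall₂ (· ≤ ·) (A.sort (· ≤ ·)) (B.sort (· ≤ ·))

/-- Valid index sets for Plücker variables. -/
def ValidIndex (n : ℕ) (I : Finset ℕ) : Prop :=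
  I.Nonempty ∧ I ⊆ seg n ∧ I.card ≤ n - 1

/-- The ideal generated by the Plücker variables vanishing on the Schubert variety `X_w`. -/
noncomputable def vanishIdeal (n : ℕ) (w : Equiv.Perm ℕ) : Ideal (MvPolynomial (Finset ℕ) ℂ) :=
  Ideal.span { f | ∃ I : Finset ℕ, ValidIndex n I ∧ ¬ domLE I ((seg I.card).image ⇑w) ∧ f = X I }

/-- The set of Plücker relations. -/
def plueckerSet (n : ℕ) : Set (MvPolynomial (Finset ℕ) ℂ) :=
  { f | ∃ k J L, ValidPair n k J L ∧ f = pluecker k J L }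

/-- The set of initial forms of the Plücker relations. -/
def initPlueckerSet (n : ℕ) : Set (MvPolynomial (Finset ℕ) ℂ) :=
  { f | ∃ k J L, ValidPair n k J L ∧ f = initw n (pluecker k J L) }

/-- The Schubert ideal `I_w`. -/
noncomputable def schubIdeal (n : ℕ) (w : Equiv.Perm ℕ) : Ideal (MvPolynomial (Finset ℕ) ℂ) :=
  Ideal.span (plueckerSet n) ⊔ vanishIdeal n w

/-- The degenerate Schubert ideal `J^a_w`. -/
noncomputable def degIdeal (n : ℕ) (w : Equiv.Perm ℕ) : Ideal (MvPolynomial (Finset ℕ) ℂ) :=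
  Ideal.span (initPlueckerSet n) ⊔ vanishIdeal n w

/-- `J^a_w` contains a product of two Plücker variables. -/
def ContainsDeg2Mono (n : ℕ) (w : Equiv.Perm ℕ) : Prop :=
  ∃ A B : Finset ℕ, ValidIndex n A ∧ ValidIndex n B ∧ X A * X B ∈ degIdeal n w

/-- `u^{i,j} = #{a ∈ [i] : u(a) ≥ j}`. -/
def uij (u : Equiv.Perm ℕ) (i j : ℕ) : ℕ := ((seg i).filter (fun a => j ≤ u a)).card

/-- Bruhat order on `S_n`. -/
def bruhatLE (n : ℕ) (v u : Equiv.Perm ℕ) : Prop :=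
  ∀ i ∈ seg n, ∀ j ∈ seg n, uij v i j ≤ uij u i j

/-- The Plücker relation `R^k_{J,L}` degenerates to a monomial on `X_u`: the image of its
initial form in the quotient by the vanishing Plücker variables is a nonzero scalar multiple
of a single monomial. -/
def DegToMono (n : ℕ) (u : Equiv.Perm ℕ) (k : ℕ) (J L : List ℕ) : Prop :=
  ∃ (m : Finset ℕ →₀ ℕ) (a : ℂ),
    Ideal.Quotient.mk (vanishIdeal n u) (initw n (pluecker k J L)) =
      Ideal.Quotient.mk (vanishIdeal n u) (monomial m a) ∧
    Ideal.Quotient.mk (vanishIdeal n u) (monomial m a) ≠ 0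

/-- `F(K) ≤ u([#K])` for a sequence `K`. -/
def seqLE (u : Equiv.Perm ℕ) (K : List ℕ) : Prop :=
  domLE K.toFinset ((seg K.length).image ⇑u)


section Helpers

lemma getD_of_lt (l : List ℕ) (i : ℕ) (h : i < l.length) : l.getD i 0 = l[i] := by
  simp [List.getElem?_eq_getElem h]

lemma list_eq_map_range (l : List ℕ) :
    (List.range l.length).map (fun i => l.getD i 0) = l := by
  apply List.ext_getElem
  · simp
  · intro i h1 h2; simp [List.getElem?_eq_getElem h2]

lemma take_eq_map_range (l : List ℕ) (k : ℕ) (hk : k ≤ l.length) :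
    (List.range k).map (fun i => l.getD i 0) = l.take k := by
  apply List.ext_getElem
  · simpa
  · intro i h1 h2
    simp only [List.getElem_map, List.getElem_range, List.getElem_take]
    rw [getD_of_lt]

lemma count_list_map_sort (f : ℕ → ℕ) (R : Finset ℕ) (x : ℕ) :
    ((R.sort (· ≤ ·)).map f).count x = (R.filter (fun r => f r = x)).card := by
  have h : (((R.sort (· ≤ ·)).map f : List ℕ) : Multiset ℕ) = R.val.map f := by
    rw [← Multiset.map_coe, Finset.sort_eq]
  rw [← Multiset.coe_count, h, Multiset.count_map, Finset.card, Finset.filter_val]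
  congr 1
  exact Multiset.filter_congr (fun r _ => by constructor <;> (intro; omega))

lemma count_list_map_range (f : ℕ → ℕ) (d x : ℕ) :
    ((List.range d).map f).count x = ((Finset.range d).filter (fun p => f p = x)).card := by
  rw [← Finset.sort_range d, count_list_map_sort]

lemma rank_lt {R : Finset ℕ} {p : ℕ} (hp : p ∈ R) : (R.filter (· < p)).card < R.card := by
  apply Finset.card_lt_card
  rw [Finset.ssubset_iff_of_subset (Finset.filter_subset _ _)]
  exact ⟨p, hp, by simp⟩

lemma rank_strictMono {R : Finset ℕ} {p q : ℕ} (hp : p ∈ R) (hpq : p < q) :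
    (R.filter (· < p)).card < (R.filter (· < q)).card := by
  apply Finset.card_lt_card
  rw [Finset.ssubset_iff_of_subset (Finset.monotone_filter_right R (fun a ha => by omega))]
  exact ⟨p, by simp [hp, hpq], by simp⟩

lemma rank_injOn {R : Finset ℕ} {p q : ℕ} (hp : p ∈ R) (hq : q ∈ R)
    (h : (R.filter (· < p)).card = (R.filter (· < q)).card) : p = q := by
  rcases lt_trichotomy p q with h' | h' | h'
  · exact absurd h (rank_strictMono hp h').ne
  · exact h'
  · exact absurd h.symm (rank_strictMono hq h').ne

lemma rank_surj {R : Finset ℕ} {k : ℕ} (hR : R.card = k) {i : ℕ} (hi : i < k) :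
    ∃ p ∈ R, (R.filter (· < p)).card = i := by
  have := Finset.surj_on_of_inj_on_of_card_le (s := R) (t := Finset.range k)
    (fun p _ => (R.filter (· < p)).card)
    (fun p hp => by simp [hR ▸ rank_lt hp])
    (fun p q hp hq h => rank_injOn hp hq h)
    (by simp [hR])
  obtain ⟨p, hp, hpi⟩ := this i (by simp [hi])
  exact ⟨p, hp, hpi.symm⟩

lemma card_rank_filter (R : Finset ℕ) (k : ℕ) (hR : R.card = k) (g : ℕ → ℕ) (x : ℕ) :
    (R.filter (fun p => g ((R.filter (· < p)).card) = x)).card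
      = ((Finset.range k).filter (fun i => g i = x)).card := by
  apply Finset.card_bij (fun p _ => (R.filter (· < p)).card)
  · intro p hp
    simp only [Finset.mem_filter] at hp ⊢
    exact ⟨Finset.mem_range.2 (hR ▸ rank_lt hp.1), hp.2⟩
  · intro p hp q hq h
    simp only [Finset.mem_filter] at hp hq
    exact rank_injOn hp.1 hq.1 h
  · intro i hi
    simp only [Finset.mem_filter, Finset.mem_range] at hi
    obtain ⟨p, hp, hpi⟩ := rank_surj hR hi.1
    exact ⟨p, Finset.mem_filter.2 ⟨hp, by rw [hpi]; exact hi.2⟩, hpi⟩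

lemma count_JLrep (J L : List ℕ) (k : ℕ) (R : Finset ℕ) (x : ℕ)
    (hRd : R ⊆ Finset.range L.length) (hRk : R.card = k) (hk : k ≤ J.length) :
    (Jrep J L k R).count x + (Lrep L J R).count x = J.count x + L.count x := by
  set d := L.length with hd
  have hJrep : (Jrep J L k R).count x
      = (R.filter (fun r => L.getD r 0 = x)).card + (J.drop k).count x := by
    rw [Jrep, List.count_append, count_list_map_sort]
  have hLrep : (Lrep L J R).count x
      = ((Finset.range d).filter (fun p =>
          (if p ∈ R then J.getD ((R.filter (· < p)).card) 0 else L.getD p 0) = x)).card := by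
    rw [Lrep, count_list_map_range]
  have hsplit : ((Finset.range d).filter (fun p =>
        (if p ∈ R then J.getD ((R.filter (· < p)).card) 0 else L.getD p 0) = x)).card
      = (R.filter (fun p => J.getD ((R.filter (· < p)).card) 0 = x)).card
        + ((Finset.range d).filter (fun p => p ∉ R ∧ L.getD p 0 = x)).card := by
    rw [← Finset.card_union_of_disjoint]
    · congr 1
      ext p
      by_cases hp : p ∈ R
      · simp [hp, Finset.mem_range.1 (hRd hp)]
      · simp [hp]
    · rw [Finset.disjoint_left]
      intro p hp hq
      simp only [Finset.mem_filter] at hp hq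
      exact hq.2.1 hp.1
  have hL1 : (R.filter (fun p => L.getD p 0 = x)).card
        + ((Finset.range d).filter (fun p => p ∉ R ∧ L.getD p 0 = x)).card
      = L.count x := by
    have hc : L.count x = ((Finset.range d).filter (fun p => L.getD p 0 = x)).card := by
      conv_lhs => rw [← list_eq_map_range L]
      rw [count_list_map_range]
    rw [hc, ← Finset.card_union_of_disjoint]
    · congr 1
      ext p
      by_cases hp : p ∈ R
      · simp [hp, Finset.mem_range.1 (hRd hp)]
      · simp [hp]
    · rw [Finset.disjoint_left]
      intro p hp hq
      simp only [Finset.mem_filter] at hp hq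
      exact hq.2.1 hp.1
  have hJtake : (R.filter (fun p => J.getD ((R.filter (· < p)).card) 0 = x)).card
      = (J.take k).count x := by
    rw [card_rank_filter R k hRk (fun i => J.getD i 0) x, ← take_eq_map_range J k hk,
      count_list_map_range]
  have hJ : J.count x = (J.take k).count x + (J.drop k).count x := by
    conv_lhs => rw [← List.take_append_drop k J]
    rw [List.count_append]
  omega

lemma countP_le_of_forall₂ {l1 l2 : List ℕ} (h : List.Forall₂ (· ≤ ·) l1 l2) (j : ℕ) :
    l1.countP (fun a => decide (j ≤ a)) ≤ l2.countP (fun a => decide (j ≤ a)) := by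
  induction h with
  | nil => simp
  | @cons a b l1' l2' hab _ ih =>
    simp only [List.countP_cons]
    by_cases hj : j ≤ a
    · have hb : j ≤ b := le_trans hj hab
      simp only [hj, hb, decide_true]
      omega
    · have : (if (decide (j ≤ a)) = true then 1 else 0) = 0 := by simp [hj]
      rw [this]
      have h2 : (if (decide (j ≤ b)) = true then 1 else 0) ≤ 1 := by split <;> omega
      omega

lemma card_filter_eq_countP_sort (A : Finset ℕ) (j : ℕ) :
    (A.filter (fun r => j ≤ r)).card = (A.sort (· ≤ ·)).countP (fun r => decide (j ≤ r)) := by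
  rw [← Multiset.coe_countP, Finset.sort_eq, Finset.card, Finset.filter_val,
    Multiset.countP_eq_card_filter]

lemma qc_le_of_domLE {A B : Finset ℕ} (h : domLE A B) (j : ℕ) :
    (A.filter (fun r => j ≤ r)).card ≤ (B.filter (fun r => j ≤ r)).card := by
  rw [card_filter_eq_countP_sort, card_filter_eq_countP_sort]
  exact countP_le_of_forall₂ h j

lemma qc_image (u : Equiv.Perm ℕ) (i j : ℕ) :
    (((seg i).image u).filter (fun r => j ≤ r)).card = uij u i j := by
  rw [Finset.filter_image, uij, Finset.card_image_of_injective _ u.injective]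

lemma good_subset (n t : ℕ) (hn : 2 ≤ n) (v c : Equiv.Perm ℕ)
    (hc1 : c 1 = n) (hca : ∀ a, 2 ≤ a → a ≤ n → c a = a - 1)
    (hvc : bruhatLE n v c) (A : Finset ℕ)
    (hA : A ⊆ seg n) (ht1 : 1 ≤ t) (htn : t ≤ n - 1) (hcard : A.card = t)
    (hdom : domLE A ((seg t).image v)) :
    Finset.Icc 1 (t-1) ⊆ A := by
  intro s hs
  simp only [Finset.mem_Icc] at hs
  obtain ⟨hs1, hs2⟩ := hs
  have h1 : (A.filter (fun r => s+1 ≤ r)).card ≤ uij v t (s+1) := by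
    rw [← qc_image v t (s+1)]
    exact qc_le_of_domLE hdom (s+1)
  have h3 : uij v t (s+1) ≤ uij c t (s+1) := by
    apply hvc t (by simp [seg]; omega) (s+1) (by simp [seg]; omega)
  have h4 : uij c t (s+1) = t - s := by
    rw [uij]
    have heq : (seg t).filter (fun a => s+1 ≤ c a) = insert 1 (Finset.Icc (s+2) t) := by
      ext a
      simp only [Finset.mem_filter, seg, Finset.mem_Icc, Finset.mem_insert]
      constructor
      · rintro ⟨⟨h1a, hat⟩, hc⟩
        by_cases ha1 : a = 1
        · left; exact ha1
        · right
          rw [hca a (by omega) (by omega)] at hc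
          omega
      · rintro (rfl | ⟨hl, hr⟩)
        · exact ⟨⟨le_refl 1, ht1⟩, by rw [hc1]; omega⟩
        · refine ⟨⟨by omega, hr⟩, ?_⟩
          rw [hca a (by omega) (by omega)]; omega
    rw [heq, Finset.card_insert_of_notMem (by simp only [Finset.mem_Icc]; omega),
      Nat.card_Icc]
    omega
  have hpart : (A.filter (fun r => s+1 ≤ r)).card
      + (A.filter (fun r => ¬ (s+1 ≤ r))).card = t := by
    rw [Finset.card_filter_add_card_filter_not, hcard]
  have hsub2 : A.filter (fun r => ¬ (s+1 ≤ r)) ⊆ Finset.Icc 1 s := by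
    intro a ha
    simp only [Finset.mem_filter] at ha
    have := hA ha.1
    simp only [seg, Finset.mem_Icc] at this ⊢
    omega
  have hIcc : A.filter (fun r => ¬ (s+1 ≤ r)) = Finset.Icc 1 s := by
    apply Finset.eq_of_subset_of_card_le hsub2
    rw [Nat.card_Icc]
    omega
  have : s ∈ A.filter (fun r => ¬ (s+1 ≤ r)) := by
    rw [hIcc]; simp; omega
  exact (Finset.mem_filter.1 this).1

lemma wt_lower (n : ℕ) (hn : 2 ≤ n) (A : Finset ℕ) (hA : A ⊆ seg n) (hne : A.Nonempty) :
    1 ≤ wt n A + (if n ∈ A then 1 else 0) := by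
  set t := A.card with ht
  have ht1 : 1 ≤ t := Finset.card_pos.2 hne
  have hfe : A.filter (fun r => r ≤ n - 1) = A.erase n := by
    ext a
    simp only [Finset.mem_filter, Finset.mem_erase]
    constructor
    · rintro ⟨ha, h2⟩; exact ⟨by omega, ha⟩
    · rintro ⟨ha, h2⟩
      have := hA h2
      simp only [seg, Finset.mem_Icc] at this
      exact ⟨h2, by omega⟩
  have hce : (A.erase n).card = t - (if n ∈ A then 1 else 0) := by
    split
    · rw [Finset.card_erase_of_mem ‹_›]
    · rw [Finset.erase_eq_of_notMem ‹_›]; omega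
  have hsplit : A.filter (fun r => r ≤ n - 1) ⊆
      (A.filter (fun r => r < t)) ∪ (A.filter (fun r => t ≤ r ∧ r ≤ n - 1)) := by
    intro a ha
    simp only [Finset.mem_filter, Finset.mem_union] at ha ⊢
    by_cases h : a < t
    · exact Or.inl ⟨ha.1, h⟩
    · exact Or.inr ⟨ha.1, by omega, ha.2⟩
  have hlt : (A.filter (fun r => r < t)).card ≤ t - 1 := by
    have hsub : A.filter (fun r => r < t) ⊆ Finset.Icc 1 (t-1) := by
      intro a ha
      simp only [Finset.mem_filter] at ha
      have := hA ha.1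
      simp only [seg, Finset.mem_Icc] at this ⊢
      omega
    calc (A.filter (fun r => r < t)).card ≤ (Finset.Icc 1 (t-1)).card :=
          Finset.card_le_card hsub
      _ = t - 1 := by rw [Nat.card_Icc]; omega
  have hcu := Finset.card_le_card hsplit
  have hcu2 := Finset.card_union_le (A.filter (fun r => r < t))
    (A.filter (fun r => t ≤ r ∧ r ≤ n - 1))
  rw [hfe] at hcu
  rw [wt, ← ht]
  have h9 : (if n ∈ A then 1 else 0) ≤ 1 := by split <;> omega
  omega

lemma wt_good (n t : ℕ) (hn : 2 ≤ n) (A : Finset ℕ) (hA : A ⊆ seg n) (ht1 : 1 ≤ t)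
    (htn : t ≤ n - 1) (hcard : A.card = t) (hsub : Finset.Icc 1 (t-1) ⊆ A) :
    wt n A + (if n ∈ A then 1 else 0) = 1 := by
  have hsd : (A \ Finset.Icc 1 (t-1)).card = 1 := by
    rw [Finset.card_sdiff_of_subset hsub, hcard, Nat.card_Icc]
    omega
  obtain ⟨m, hm⟩ := Finset.card_eq_one.1 hsd
  have hmA : m ∈ A := by
    have : m ∈ A \ Finset.Icc 1 (t-1) := by rw [hm]; simp
    exact (Finset.mem_sdiff.1 this).1
  have hmn : m ≤ n := by
    have := hA hmA
    simp only [seg, Finset.mem_Icc] at this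
    exact this.2
  have hmt : t ≤ m := by
    have : m ∈ A \ Finset.Icc 1 (t-1) := by rw [hm]; simp
    have h2 := (Finset.mem_sdiff.1 this).2
    have h3 := hA hmA
    simp only [seg, Finset.mem_Icc] at h2 h3
    omega
  have hfil : A.filter (fun r => A.card ≤ r ∧ r ≤ n - 1)
      = ({m} : Finset ℕ).filter (fun r => A.card ≤ r ∧ r ≤ n - 1) := by
    rw [← hm]
    ext a
    simp only [Finset.mem_filter, Finset.mem_sdiff, Finset.mem_Icc, hcard]
    constructor
    · rintro ⟨ha, h1, h2⟩
      exact ⟨⟨ha, by omega⟩, h1, h2⟩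
    · rintro ⟨⟨ha, _⟩, h1, h2⟩
      exact ⟨ha, h1, h2⟩
  have hnm : n ∈ A ↔ m = n := by
    constructor
    · intro hnA
      have : n ∈ A \ Finset.Icc 1 (t-1) := by
        simp only [Finset.mem_sdiff, Finset.mem_Icc]
        exact ⟨hnA, by omega⟩
      rw [hm] at this
      exact (Finset.mem_singleton.1 this).symm
    · rintro rfl; exact hmA
  rw [wt, hfil, hcard]
  by_cases hmeq : m = n
  · have h0 : ({m} : Finset ℕ).filter (fun r => t ≤ r ∧ r ≤ n - 1) = ∅ := by
      rw [Finset.filter_singleton, if_neg]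
      omega
    rw [h0]
    simp [hnm.2 hmeq]
  · have h0 : ({m} : Finset ℕ).filter (fun r => t ≤ r ∧ r ≤ n - 1) = {m} := by
      rw [Finset.filter_singleton, if_pos ⟨hmt, by omega⟩]
    rw [h0]
    have : n ∉ A := fun h => hmeq (hnm.1 h)
    simp [this]

lemma ite_toFinset_count {l : List ℕ} (h : l.Nodup) (x : ℕ) :
    (if x ∈ l.toFinset then (1:ℕ) else 0) = l.count x := by
  rw [h.count]
  by_cases hx : x ∈ l <;> simp [hx]

lemma mem_vanishIdeal_iff {n : ℕ} {w : Equiv.Perm ℕ} {f : MvPolynomial (Finset ℕ) ℂ} :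
    f ∈ vanishIdeal n w ↔ ∀ m ∈ f.support,
      ∃ I, (ValidIndex n I ∧ ¬ domLE I ((seg I.card).image ⇑w)) ∧ (m : Finset ℕ →₀ ℕ) I ≠ 0 := by
  have hset : { f : MvPolynomial (Finset ℕ) ℂ |
        ∃ I : Finset ℕ, ValidIndex n I ∧ ¬ domLE I ((seg I.card).image ⇑w) ∧ f = X I }
      = MvPolynomial.X '' {I | ValidIndex n I ∧ ¬ domLE I ((seg I.card).image ⇑w)} := by
    ext g
    simp only [Set.mem_setOf_eq, Set.mem_image]
    constructor
    · rintro ⟨I, h1, h2, rfl⟩; exact ⟨I, ⟨h1, h2⟩, rfl⟩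
    · rintro ⟨I, ⟨h1, h2⟩, rfl⟩; exact ⟨I, h1, h2, rfl⟩
  rw [vanishIdeal, hset, MvPolynomial.mem_ideal_span_X_image]
  simp only [Set.mem_setOf_eq]

lemma mwt_pair (n : ℕ) (A B : Finset ℕ) :
    mwt n (Finsupp.single A 1 + Finsupp.single B 1) = wt n A + wt n B := by
  rw [mwt, Finsupp.sum_add_index' (h := fun I e => e * wt n I) (fun I => zero_mul _)
      (fun I e1 e2 => add_mul e1 e2 _),
    Finsupp.sum_single_index (h := fun I e => e * wt n I) (zero_mul (wt n A)),
    Finsupp.sum_single_index (h := fun I e => e * wt n I) (zero_mul (wt n B)),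
    one_mul, one_mul]

lemma support_pseq_mul {l1 l2 : List ℕ} {m : Finset ℕ →₀ ℕ}
    (hm : m ∈ (pseq l1 * pseq l2).support) :
    l1.Nodup ∧ l2.Nodup ∧
      m = Finsupp.single l1.toFinset 1 + Finsupp.single l2.toFinset 1 := by
  simp only [pseq] at hm
  by_cases h1 : l1.Nodup
  swap
  · rw [if_neg h1, zero_mul] at hm; simp at hm
  by_cases h2 : l2.Nodup
  swap
  · rw [if_neg h2, mul_zero] at hm; simp at hm
  rw [if_pos h1, if_pos h2] at hm
  refine ⟨h1, h2, ?_⟩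
  have hsm : (((-1 : ℂ) ^ inv l1) • X l1.toFinset) * (((-1 : ℂ) ^ inv l2) • X l2.toFinset)
      = ((-1 : ℂ) ^ inv l1 * (-1 : ℂ) ^ inv l2) •
          ((X l1.toFinset : MvPolynomial (Finset ℕ) ℂ) * X l2.toFinset) := by
    rw [smul_mul_smul_comm]
  rw [hsm] at hm
  have hsub := MvPolynomial.support_smul hm
  have hXX : (X l1.toFinset : MvPolynomial (Finset ℕ) ℂ) * X l2.toFinset
      = monomial (Finsupp.single l1.toFinset 1 + Finsupp.single l2.toFinset 1) 1 := by
    rw [MvPolynomial.X, MvPolynomial.X, MvPolynomial.monomial_mul, one_mul]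
  rw [hXX] at hsub
  have := MvPolynomial.mem_support_iff.1 hsub
  rw [MvPolynomial.coeff_monomial] at this
  by_cases heq : Finsupp.single l1.toFinset 1 + Finsupp.single l2.toFinset 1 = m
  · exact heq.symm
  · rw [if_neg heq] at this; exact absurd rfl this

lemma pluecker_pair (n k : ℕ) (J L : List ℕ) (hval : ValidPair n k J L)
    {m : Finset ℕ →₀ ℕ} (hm : m ∈ (pluecker k J L).support) :
    ∃ A B : Finset ℕ,
      m = Finsupp.single A 1 + Finsupp.single B 1 ∧
      A.card = J.length ∧ B.card = L.length ∧ A ⊆ seg n ∧ B ⊆ seg n ∧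
      ((if n ∈ A then 1 else 0) + (if n ∈ B then 1 else 0) : ℕ) = J.count n + L.count n := by
  obtain ⟨hJnd, hLnd, hJseg, hLseg, he1, hed, hdn, hk1, hke⟩ := hval
  rw [pluecker] at hm
  have hm2 := MvPolynomial.support_sub _ _ _ hm
  rw [Finset.mem_union] at hm2
  rcases hm2 with hm2 | hm2
  · obtain ⟨h1, h2, rfl⟩ := support_pseq_mul hm2
    refine ⟨J.toFinset, L.toFinset, rfl, List.toFinset_card_of_nodup h1,
      List.toFinset_card_of_nodup h2,
      fun a ha => hJseg a (List.mem_toFinset.1 ha),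
      fun a ha => hLseg a (List.mem_toFinset.1 ha), ?_⟩
    rw [ite_toFinset_count h1, ite_toFinset_count h2]
  · have hm3 := MvPolynomial.support_sum hm2
    rw [Finset.mem_biUnion] at hm3
    obtain ⟨R, hR, hmR⟩ := hm3
    rw [Finset.mem_powersetCard] at hR
    obtain ⟨hRsub, hRk⟩ := hR
    obtain ⟨h1, h2, rfl⟩ := support_pseq_mul hmR
    have hJrl : (Jrep J L k R).length = J.length := by
      rw [Jrep, List.length_append, List.length_map, Finset.length_sort, hRk,
        List.length_drop]
      omega
    have hLrl : (Lrep L J R).length = L.length := by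
      rw [Lrep, List.length_map, List.length_range]
    have hJre : ∀ a ∈ Jrep J L k R, a ∈ seg n := by
      intro a ha
      rw [Jrep, List.mem_append] at ha
      rcases ha with ha | ha
      · rw [List.mem_map] at ha
        obtain ⟨r, hr, rfl⟩ := ha
        have hrR : r ∈ R := (Finset.mem_sort _).1 hr
        have hrd : r < L.length := Finset.mem_range.1 (hRsub hrR)
        rw [getD_of_lt _ _ hrd]
        exact hLseg _ (List.getElem_mem _)
      · exact hJseg _ (List.mem_of_mem_drop ha)
    have hLre : ∀ a ∈ Lrep L J R, a ∈ seg n := by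
      intro a ha
      rw [Lrep, List.mem_map] at ha
      obtain ⟨p, hp, rfl⟩ := ha
      have hpd : p < L.length := List.mem_range.1 hp
      by_cases hpR : p ∈ R
      · rw [if_pos hpR]
        have : (R.filter (· < p)).card < J.length := by
          have := rank_lt hpR
          omega
        rw [getD_of_lt _ _ this]
        exact hJseg _ (List.getElem_mem _)
      · rw [if_neg hpR, getD_of_lt _ _ hpd]
        exact hLseg _ (List.getElem_mem _)
    refine ⟨(Jrep J L k R).toFinset, (Lrep L J R).toFinset, rfl,
      by rw [List.toFinset_card_of_nodup h1, hJrl],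
      by rw [List.toFinset_card_of_nodup h2, hLrl],
      fun a ha => hJre a (List.mem_toFinset.1 ha),
      fun a ha => hLre a (List.mem_toFinset.1 ha), ?_⟩
    rw [ite_toFinset_count h1, ite_toFinset_count h2]
    exact count_JLrep J L k R n hRsub hRk hke

lemma diff_mem_vanish (n : ℕ) (hn : 2 ≤ n) (v c : Equiv.Perm ℕ)
    (hc1 : c 1 = n) (hca : ∀ a, 2 ≤ a → a ≤ n → c a = a - 1)
    (hvc : bruhatLE n v c) (k : ℕ) (J L : List ℕ) (hval : ValidPair n k J L) :
    pluecker k J L - initw n (pluecker k J L) ∈ vanishIdeal n v := by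
  set f := pluecker k J L with hf
  set cnt := J.count n + L.count n with hcnt
  have claim1 : ∀ m ∈ f.support, 2 ≤ mwt n m + cnt := by
    intro m hm
    obtain ⟨A, B, rfl, hcA, hcB, hAseg, hBseg, hAB⟩ := pluecker_pair n k J L hval hm
    rw [mwt_pair]
    have hApos : A.Nonempty := Finset.card_pos.mp (by rw [hcA]; exact hval.2.2.2.2.1)
    have hBpos : B.Nonempty := Finset.card_pos.mp (by
      rw [hcB]
      have := hval.2.2.2.2.1
      have := hval.2.2.2.2.2.1
      omega)
    have l1 := wt_lower n hn A hAseg hApos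
    have l2 := wt_lower n hn B hBseg hBpos
    omega
  have claim2 : ∀ m ∈ f.support,
      (∀ I : Finset ℕ, (m : Finset ℕ →₀ ℕ) I ≠ 0 →
        ¬ (ValidIndex n I ∧ ¬ domLE I ((seg I.card).image ⇑v))) →
      mwt n m + cnt = 2 := by
    intro m hm hgood
    obtain ⟨A, B, rfl, hcA, hcB, hAseg, hBseg, hAB⟩ := pluecker_pair n k J L hval hm
    have he1 := hval.2.2.2.2.1
    have hed := hval.2.2.2.2.2.1
    have hdn := hval.2.2.2.2.2.2.1
    have hmA : (Finsupp.single A 1 + Finsupp.single B 1 : Finset ℕ →₀ ℕ) A ≠ 0 := by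
      rw [Finsupp.add_apply, Finsupp.single_eq_same]
      omega
    have hmB : (Finsupp.single A 1 + Finsupp.single B 1 : Finset ℕ →₀ ℕ) B ≠ 0 := by
      rw [Finsupp.add_apply, Finsupp.single_eq_same]
      omega
    have hvalidA : ValidIndex n A :=
      ⟨Finset.card_pos.mp (by omega), hAseg, by omega⟩
    have hvalidB : ValidIndex n B :=
      ⟨Finset.card_pos.mp (by omega), hBseg, by omega⟩
    have hdomA : domLE A ((seg A.card).image ⇑v) := by
      by_contra hnd
      exact (hgood A hmA) ⟨hvalidA, hnd⟩
    have hdomB : domLE B ((seg B.card).image ⇑v) := by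
      by_contra hnd
      exact (hgood B hmB) ⟨hvalidB, hnd⟩
    have hgA := wt_good n A.card hn A hAseg (by omega) (by omega) rfl
      (good_subset n A.card hn v c hc1 hca hvc A hAseg (by omega) (by omega) rfl hdomA)
    have hgB := wt_good n B.card hn B hBseg (by omega) (by omega) rfl
      (good_subset n B.card hn v c hc1 hca hvc B hBseg (by omega) (by omega) rfl hdomB)
    rw [mwt_pair]
    omega
  have hfsum : f - initw n f = ∑ m ∈ f.support.filter
      (fun m => ¬ ∀ m' ∈ f.support, mwt n m ≤ mwt n m'), monomial m (f.coeff m) := by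
    have hpart := Finset.sum_filter_add_sum_filter_not f.support
      (fun m => ∀ m' ∈ f.support, mwt n m ≤ mwt n m') (fun m => monomial m (f.coeff m))
    have hff : (∑ m ∈ f.support, monomial m (f.coeff m)) = f :=
      MvPolynomial.support_sum_monomial_coeff f
    rw [← hpart] at hff
    simp only [initw]
    linear_combination -hff
  rw [hfsum]
  apply Ideal.sum_mem
  intro m hmf
  rw [Finset.mem_filter] at hmf
  obtain ⟨hms, hnotmin⟩ := hmf
  push_neg at hnotmin
  obtain ⟨m', hm's, hlt⟩ := hnotmin
  have h1 := claim1 m' hm's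
  have hgt : 2 < mwt n m + cnt := by omega
  by_cases hgood : ∀ I : Finset ℕ, (m : Finset ℕ →₀ ℕ) I ≠ 0 →
      ¬ (ValidIndex n I ∧ ¬ domLE I ((seg I.card).image ⇑v))
  · have := claim2 m hms hgood
    omega
  · push_neg at hgood
    obtain ⟨I, hI0, hIval, hInd⟩ := hgood
    rw [mem_vanishIdeal_iff]
    intro m'' hm''
    have hm''e : m'' = m := by
      have := MvPolynomial.mem_support_iff.1 hm''
      rw [MvPolynomial.coeff_monomial] at this
      by_cases heq : m = m''
      · exact heq.symm
      · rw [if_neg heq] at this; exact absurd rfl this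
    rw [hm''e]
    exact ⟨I, ⟨hIval, hInd⟩, hI0⟩

end Helpers

/-- for `v ≤ c` the Schubert ideal equals the degenerate Schubert ideal. -/
theorem stmt_9 (n : ℕ) (hn : 2 ≤ n) (v c : Equiv.Perm ℕ)
    (hvfix : ∀ a, a ∉ seg n → v a = a)
    (hc1 : c 1 = n) (hca : ∀ a, 2 ≤ a → a ≤ n → c a = a - 1)
    (hcfix : ∀ a, a ∉ seg n → c a = a)
    (hvc : bruhatLE n v c) :
    schubIdeal n v = degIdeal n v := by
  apply le_antisymm
  · rw [schubIdeal]
    apply sup_le _ le_sup_right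
    rw [Ideal.span_le]
    rintro g ⟨k, J, L, hvalp, rfl⟩
    have hdiff := diff_mem_vanish n hn v c hc1 hca hvc k J L hvalp
    have hrepr : pluecker k J L
        = initw n (pluecker k J L) + (pluecker k J L - initw n (pluecker k J L)) := by ring
    rw [SetLike.mem_coe, hrepr]
    exact Ideal.add_mem _
      (Ideal.mem_sup_left (Ideal.subset_span ⟨k, J, L, hvalp, rfl⟩))
      (Ideal.mem_sup_right hdiff)
  · rw [degIdeal]
    apply sup_le _ le_sup_right
    rw [Ideal.span_le]
    rintro g ⟨k, J, L, hvalp, rfl⟩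
    have hdiff := diff_mem_vanish n hn v c hc1 hca hvc k J L hvalp
    have hrepr : initw n (pluecker k J L)
        = pluecker k J L - (pluecker k J L - initw n (pluecker k J L)) := by ring
    rw [SetLike.mem_coe, hrepr]
    exact Ideal.sub_mem _
      (Ideal.mem_sup_left (Ideal.subset_span ⟨k, J, L, hvalp, rfl⟩))
      (Ideal.mem_sup_right hdiff)


end DegSchubert
end

section
/- Let n ≥ 2, m ∈ [n−1], and set x := s_m∘s_{m−1}∘⋯∘s_1 ∈ S_n (so x(1) = m+1, x(a) = a−1 for 2 ≤ a ≤ m+1, and x(a) = a for a > m+1). Let y_n ∈ S_{2n−2} be defined by y_n(1) = 1, y_n(2r) = r+1 for r ∈ [n−1], and y_n(2r−1) = n+r−1 for r ∈ [2, n−1]; let v := s̃_m∘s̃_{m−1}∘⋯∘s̃_1∘y_n ∈ S_{2n−2}, where s̃_i denotes the adjacent transposition (i, i+1) in S_{2n−2}. For k ∈ [n−1], define ρ_k : [n] → [k, n+k−1] by ρ_k(j) = j for j ∈ [k, n] and ρ_k(j) = j+n for j ∈ [k−1]. Then for every k ∈ [n−1], the map I ↦ [k−1] ∪ ρ_k(I)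 is a bijection from { I ⊆ [n] : #I = k and I ≤ x([k]) } onto { K ⊆ [2n−2] : #K = 2k−1, y_n([2k−1]) ≤ K, and K ≤ v([2k−1]) }, where ≤ denotes the componentwise order on equal-size subsets. (This is the combinatorial content, on the level of Plücker indices, of the identification ζ(X^a_{s_m⋯s_1}) = X̃^{y_n}_{s̃_m⋯s̃_1 y_n} of a degenerate Schubert variety with a Richardson variety in SL_{2n−2}/P.) -/
open Finset MvPolynomial

namespace DegSchubert

/-- explicit sorted list -/
def ell (k j nn d : ℕ) : List ℕ :=
  List.range' 1 (k-1) ++ [j] ++ List.range' (nn+1) d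

lemma ell_length (k j nn d : ℕ) : (ell k j nn d).length = (k-1) + 1 + d := by
  simp [ell]; omega

lemma ell_get_lt {k i : ℕ} (j nn d : ℕ) (h : i < k - 1) (hh : i < (ell k j nn d).length) :
    (ell k j nn d)[i] = 1 + i := by
  unfold ell at *
  rw [List.getElem_append_left (by simp; omega), List.getElem_append_left (by simp; omega),
    List.getElem_range'_1]

lemma ell_get_mid {k : ℕ} (j nn d : ℕ) (hh : k - 1 < (ell k j nn d).length) :
    (ell k j nn d)[k-1] = j := by
  unfold ell at *
  rw [List.getElem_append_left (by simp), List.getElem_append_right (by simp)]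
  simp

lemma ell_get_high {k i : ℕ} (j nn d : ℕ) (h : k - 1 < i) (hh : i < (ell k j nn d).length) :
    (ell k j nn d)[i] = nn + (i - (k-1)) := by
  unfold ell at *
  rw [List.getElem_append_right (by simp; omega), List.getElem_range'_1]
  simp only [List.length_append, List.length_range', List.length_cons, List.length_nil]
  omega

lemma ell_sorted {k j nn : ℕ} (d : ℕ) (hk : 1 ≤ k) (hj : k ≤ j) (hn : j ≤ nn) :
    (ell k j nn d).Pairwise (· < ·) := by
  unfold ell
  rw [List.pairwise_append, List.pairwise_append]
  refine ⟨⟨List.pairwise_lt_range', by simp, ?_⟩, List.pairwise_lt_range', ?_⟩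
  · intro a ha b hb
    rw [List.mem_range'_1] at ha
    simp at hb
    omega
  · intro a ha b hb
    rw [List.mem_append, List.mem_range'_1] at ha
    rw [List.mem_range'_1] at hb
    rcases ha with h | h
    · omega
    · simp at h; omega

lemma ell_toFinset (k j nn d : ℕ) :
    (ell k j nn d).toFinset = Finset.Icc 1 (k-1) ∪ {j} ∪ Finset.Icc (nn+1) (nn+d) := by
  ext a
  simp [ell, List.mem_range'_1, Finset.mem_Icc]
  omega

lemma sortUnion {k j nn : ℕ} (d : ℕ) (hk : 1 ≤ k) (hj : k ≤ j) (hn : j ≤ nn) :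
    (Finset.Icc 1 (k-1) ∪ {j} ∪ Finset.Icc (nn+1) (nn+d)).sort (· ≤ ·) = ell k j nn d := by
  rw [← ell_toFinset]
  exact (List.toFinset_sort _ (ell_sorted d hk hj hn).nodup).mpr
    ((ell_sorted d hk hj hn).imp fun h => le_of_lt h)

lemma cardUnion {k j nn : ℕ} (d : ℕ) (hk : 1 ≤ k) (hj : k ≤ j) (hn : j ≤ nn) :
    (Finset.Icc 1 (k-1) ∪ {j} ∪ Finset.Icc (nn+1) (nn+d)).card = k + d := by
  rw [← ell_toFinset, List.toFinset_card_of_nodup (ell_sorted d hk hj hn).nodup, ell_length]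
  omega

lemma ell_le_ell {k j j' nn d : ℕ} (h : j ≤ j') :
    List.Forall₂ (· ≤ ·) (ell k j nn d) (ell k j' nn d) := by
  unfold ell
  exact List.rel_append (List.rel_append (List.forall₂_refl _)
    (List.Forall₂.cons h List.Forall₂.nil)) (List.forall₂_refl _)

lemma sorted_ge {c : ℕ} : ∀ {l : List ℕ}, l.Pairwise (· < ·) → (∀ x ∈ l, c ≤ x) →
    ∀ i (hi : i < l.length), c + i ≤ l[i] := by
  intro l
  induction l generalizing c with
  | nil => intro _ _ i hi; simp at hi
  | cons a t ih =>
    intro hs hc i hi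
    match i with
    | 0 => simpa using hc a (by simp)
    | Nat.succ i =>
      have ht : i < t.length := by simpa using hi
      have h1 : a + 1 + i ≤ t[i] :=
        ih (List.pairwise_cons.mp hs).2 (fun x hx => (List.pairwise_cons.mp hs).1 x hx) i ht
      have h2 := hc a (by simp)
      have h3 : (a :: t)[i+1]'hi = t[i]'ht := by simp
      rw [h3]
      omega

lemma extract {k j nn : ℕ} (d : ℕ) (hk : 1 ≤ k) (hj : k ≤ j) (hn : j ≤ nn) (S : Finset ℕ)
    (hcard : S.card = k + d)
    (hlo : List.Forall₂ (· ≤ ·) (ell k k nn d) (S.sort (· ≤ ·)))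
    (hup : List.Forall₂ (· ≤ ·) (S.sort (· ≤ ·)) (ell k j nn d)) :
    ∃ c, k ≤ c ∧ c ≤ j ∧ S = Finset.Icc 1 (k-1) ∪ {c} ∪ Finset.Icc (nn+1) (nn+d) := by
  set κ := S.sort (· ≤ ·) with hκ
  obtain ⟨hlen_lo, hlo'⟩ := List.forall₂_iff_get.mp hlo
  obtain ⟨hlen_up, hup'⟩ := List.forall₂_iff_get.mp hup
  simp only [List.get_eq_getElem] at hlo' hup'
  have hκlen : κ.length = k + d := by rw [hκ, Finset.length_sort, hcard]
  have helen : ∀ j', (ell k j' nn d).length = (k-1) + 1 + d := fun j' => ell_length k j' nn d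
  have hmid : k - 1 < κ.length := by omega
  set c := κ[k-1] with hcdef
  have hc1 : k ≤ c := by
    have := hlo' (k-1) (by rw [helen]; omega) hmid
    rwa [ell_get_mid] at this
  have hc2 : c ≤ j := by
    have := hup' (k-1) hmid (by rw [helen]; omega)
    rwa [ell_get_mid] at this
  have hκeq : κ = ell k c nn d := by
    apply List.ext_get (by rw [helen]; omega)
    intro i h1 h2
    simp only [List.get_eq_getElem]
    rcases lt_trichotomy i (k-1) with h | h | h
    · have hlow := hlo' i (by rw [helen]; omega) h1
      have hupp := hup' i h1 (by rw [helen]; omega)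
      rw [ell_get_lt k nn d h] at hlow
      rw [ell_get_lt j nn d h] at hupp
      rw [ell_get_lt c nn d h]
      omega
    · subst h; rw [ell_get_mid]
    · have hlow := hlo' i (by rw [helen]; omega) h1
      have hupp := hup' i h1 (by rw [helen]; omega)
      rw [ell_get_high k nn d h] at hlow
      rw [ell_get_high j nn d h] at hupp
      rw [ell_get_high c nn d h]
      omega
  refine ⟨c, hc1, hc2, ?_⟩
  rw [← ell_toFinset k c nn d, ← hκeq, hκ, Finset.sort_toFinset]


lemma swapProd_spec (m : ℕ) :
    ((((List.range m).map (fun t => Equiv.swap (m - t) (m - t + 1))).prod) 1 = m + 1) ∧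
    (∀ a, 2 ≤ a → a ≤ m + 1 →
      (((List.range m).map (fun t => Equiv.swap (m - t) (m - t + 1))).prod) a = a - 1) ∧
    (∀ a, m + 1 < a →
      (((List.range m).map (fun t => Equiv.swap (m - t) (m - t + 1))).prod) a = a) := by
  induction m with
  | zero =>
    refine ⟨by simp, fun a h1 h2 => by omega, fun a h => by simp⟩
  | succ m ih =>
    obtain ⟨ih1, ih2, ih3⟩ := ih
    have hlist : (List.range (m+1)).map (fun t => Equiv.swap (m + 1 - t) (m + 1 - t + 1)) =
        Equiv.swap (m+1) (m+2) :: (List.range m).map (fun t => Equiv.swap (m - t) (m - t + 1)) := by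
      rw [List.range_succ_eq_map, List.map_cons, List.map_map]
      congr 1
      apply List.map_congr_left
      intro t ht
      simp only [Function.comp_apply]
      congr 1 <;> omega
    rw [hlist, List.prod_cons]
    set P := ((List.range m).map (fun t => Equiv.swap (m - t) (m - t + 1))).prod with hP
    refine ⟨?_, ?_, ?_⟩
    · rw [Equiv.Perm.mul_apply, ih1, Equiv.swap_apply_left]
    · intro a h1 h2
      rw [Equiv.Perm.mul_apply]
      rcases Nat.lt_or_ge a (m+2) with h | h
      · rw [ih2 a h1 (by omega), Equiv.swap_apply_of_ne_of_ne (by omega) (by omega)]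
      · have ha : a = m + 2 := by omega
        rw [ha, ih3 _ (by omega), Equiv.swap_apply_right]
        omega
    · intro a h
      rw [Equiv.Perm.mul_apply, ih3 a (by omega),
        Equiv.swap_apply_of_ne_of_ne (by omega) (by omega)]

variable {m n k : ℕ}

lemma image_seg (u : Equiv.Perm ℕ) (hu1 : u 1 = m + 1)
    (hu2 : ∀ a, 2 ≤ a → a ≤ m + 1 → u a = a - 1)
    (hu3 : ∀ a, m + 1 < a → u a = a) (hk : 1 ≤ k) :
    (Finset.Icc 1 k).image u = Finset.Icc 1 (k-1) ∪ {max k (m+1)} := by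
  ext b
  simp only [Finset.mem_image, Finset.mem_Icc, Finset.mem_union, Finset.mem_singleton]
  constructor
  · rintro ⟨a, ⟨ha1, ha2⟩, rfl⟩
    rcases Nat.lt_or_ge a 2 with h | h
    · have : a = 1 := by omega
      subst this
      rw [hu1]; omega
    · rcases le_or_gt a (m+1) with h' | h'
      · rw [hu2 a h h']; omega
      · rw [hu3 a h']; omega
  · rintro (⟨hb1, hb2⟩ | rfl)
    · rcases le_or_gt b m with h | h
      · exact ⟨b + 1, by omega, by rw [hu2 (b+1) (by omega) (by omega)]; omega⟩
      · rcases Nat.eq_or_lt_of_le h with h' | h'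
        · exact ⟨1, by omega, by rw [hu1]; omega⟩
        · exact ⟨b, by omega, hu3 b (by omega)⟩
    · rcases le_or_gt k (m+1) with h | h
      · exact ⟨1, by omega, by rw [hu1]; omega⟩
      · exact ⟨k, by omega, by rw [hu3 k (by omega)]; omega⟩

lemma image_segy (y : Equiv.Perm ℕ) (hy1 : y 1 = 1)
    (hy2 : ∀ r ∈ Finset.Icc 1 (n-1), y (2 * r) = r + 1)
    (hy3 : ∀ r, 2 ≤ r → r ≤ n - 1 → y (2 * r - 1) = n + r - 1)
    (hn : 2 ≤ n) (hk1 : 1 ≤ k) (hk2 : k ≤ n - 1) :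
    (Finset.Icc 1 (2*k-1)).image y = Finset.Icc 1 (k-1) ∪ {k} ∪ Finset.Icc (n+1) (n+(k-1)) := by
  ext b
  simp only [Finset.mem_image, Finset.mem_Icc, Finset.mem_union, Finset.mem_singleton]
  constructor
  · rintro ⟨a, ⟨ha1, ha2⟩, rfl⟩
    rcases Nat.lt_or_ge a 2 with h | h
    · have : a = 1 := by omega
      subst this; rw [hy1]; omega
    · rcases Nat.even_or_odd a with ⟨r, hr⟩ | ⟨r, hr⟩
      · have hae : a = 2 * r := by omega
        subst hae
        rw [hy2 r (Finset.mem_Icc.mpr ⟨by omega, by omega⟩)]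
        omega
      · have hae : a = 2 * (r + 1) - 1 := by omega
        rw [hae, hy3 (r+1) (by omega) (by omega)]
        omega
  · rintro ((⟨hb1, hb2⟩ | hbk) | ⟨hb1, hb2⟩)
    · rcases Nat.lt_or_ge b 2 with h | h
      · exact ⟨1, by omega, by rw [hy1]; omega⟩
      · exact ⟨2 * (b - 1), by omega, by
          rw [hy2 (b-1) (Finset.mem_Icc.mpr ⟨by omega, by omega⟩)]; omega⟩
    · rcases Nat.lt_or_ge k 2 with h | h
      · exact ⟨1, by omega, by rw [hy1]; omega⟩
      · exact ⟨2 * (k - 1), by omega, by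
          rw [hy2 (k-1) (Finset.mem_Icc.mpr ⟨by omega, by omega⟩)]; omega⟩
    · refine ⟨2 * (b - n + 1) - 1, by omega, by
        rw [hy3 (b - n + 1) (by omega) (by omega)]; omega⟩

lemma image_fix (u : Equiv.Perm ℕ) (hu3 : ∀ a, m + 1 < a → u a = a) (hm : m + 1 ≤ n) (d : ℕ) :
    (Finset.Icc (n+1) (n+d)).image u = Finset.Icc (n+1) (n+d) := by
  ext b
  simp only [Finset.mem_image, Finset.mem_Icc]
  constructor
  · rintro ⟨a, ⟨ha1, ha2⟩, rfl⟩
    rw [hu3 a (by omega)]; omega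
  · intro hb
    exact ⟨b, hb, hu3 b (by omega)⟩


lemma lower_bnd {k : ℕ} (hk : 1 ≤ k) (nn : ℕ) (S : Finset ℕ) (hS : ∀ a ∈ S, 1 ≤ a)
    (hcard : S.card = k) :
    List.Forall₂ (· ≤ ·) (ell k k nn 0) (S.sort (· ≤ ·)) := by
  rw [List.forall₂_iff_get]
  have hl : (ell k k nn 0).length = (k-1) + 1 + 0 := ell_length k k nn 0
  have hκ : (S.sort (· ≤ ·)).length = k := by simp [hcard]
  refine ⟨by omega, ?_⟩
  intro i h1 h2
  simp only [List.get_eq_getElem]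
  have hge := sorted_ge (S.sortedLT_sort.pairwise) (fun x hx => hS x (by simpa using hx)) i h2
  rcases Nat.lt_or_ge i (k-1) with h | h
  · rw [ell_get_lt k nn 0 h]; omega
  · have hik : i = k - 1 := by omega
    subst hik
    rw [ell_get_mid]; omega

lemma map_eq {n k j : ℕ} (hk : 1 ≤ k) (hj : k ≤ j) (hjn : j ≤ n) :
    Finset.Icc 1 (k-1) ∪ (Finset.Icc 1 (k-1) ∪ {j} ∪ Finset.Icc (n+1) (n+0)).image
        (fun a => if k ≤ a then a else a + n) =
      Finset.Icc 1 (k-1) ∪ {j} ∪ Finset.Icc (n+1) (n+(k-1)) := by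
  ext b
  simp only [Finset.mem_union, Finset.mem_image, Finset.mem_Icc, Finset.mem_singleton]
  constructor
  · rintro (⟨h1, h2⟩ | ⟨a, ((⟨ha1, ha2⟩ | rfl) | ⟨ha1, ha2⟩), rfl⟩)
    · omega
    · split_ifs <;> omega
    · split_ifs <;> omega
    · split_ifs <;> omega
  · rintro ((⟨h1, h2⟩ | rfl) | ⟨h1, h2⟩)
    · exact Or.inl ⟨h1, h2⟩
    · exact Or.inr ⟨b, Or.inl (Or.inr rfl), by rw [if_pos hj]⟩
    · exact Or.inr ⟨b - n, Or.inl (Or.inl ⟨by omega, by omega⟩), by rw [if_neg (by omega)]; omega⟩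

/-- combinatorial bijection underlying the identification of the degenerate
Schubert variety `X^a_{s_m⋯s_1}` with a Richardson variety in `SL_{2n−2}/P`. -/
theorem stmt_18 (n : ℕ) (hn : 2 ≤ n) (m : ℕ) (hm : m ∈ seg (n - 1))
    (x : Equiv.Perm ℕ) (hx1 : x 1 = m + 1) (hx2 : ∀ a, 2 ≤ a → a ≤ m + 1 → x a = a - 1)
    (hx3 : ∀ a, m + 1 < a → x a = a)
    (y : Equiv.Perm ℕ) (hy1 : y 1 = 1) (hy2 : ∀ r ∈ seg (n - 1), y (2 * r) = r + 1)
    (hy3 : ∀ r, 2 ≤ r → r ≤ n - 1 → y (2 * r - 1) = n + r - 1) :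
    ∀ k ∈ seg (n - 1),
      Set.BijOn
        (fun I : Finset ℕ => Finset.Icc 1 (k - 1) ∪ I.image (fun j => if k ≤ j then j else j + n))
        {I : Finset ℕ | I ⊆ seg n ∧ I.card = k ∧ domLE I ((seg k).image ⇑x)}
        {K : Finset ℕ | K ⊆ seg (2 * n - 2) ∧ K.card = 2 * k - 1 ∧
          domLE ((seg (2 * k - 1)).image ⇑y) K ∧
          domLE K ((seg (2 * k - 1)).image
            ⇑((((List.range m).map (fun t => Equiv.swap (m - t) (m - t + 1))).prod) * y))} := by
  obtain ⟨hm1, hm2⟩ := Finset.mem_Icc.mp hm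
  intro k hk
  obtain ⟨hk1, hk2⟩ := Finset.mem_Icc.mp hk
  set M := max k (m+1) with hM
  have hMk : k ≤ M := le_max_left _ _
  have hMn : M ≤ n := by omega
  obtain ⟨hP1, hP2, hP3⟩ := swapProd_spec m
  set P := ((List.range m).map (fun t => Equiv.swap (m - t) (m - t + 1))).prod with hPdef
  have hximg : (seg k).image ⇑x = Finset.Icc 1 (k-1) ∪ {M} ∪ Finset.Icc (n+1) (n+0) := by
    show (Finset.Icc 1 k).image ⇑x = _
    rw [image_seg x hx1 hx2 hx3 hk1,
      show Finset.Icc (n+1) (n+0) = ∅ from Finset.Icc_eq_empty (by omega), Finset.union_empty]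
  have hyimg : (seg (2*k-1)).image ⇑y
      = Finset.Icc 1 (k-1) ∪ {k} ∪ Finset.Icc (n+1) (n+(k-1)) := by
    show (Finset.Icc 1 (2*k-1)).image ⇑y = _
    exact image_segy y hy1 hy2 hy3 hn hk1 hk2
  have hvimg : (seg (2*k-1)).image ⇑(P * y)
      = Finset.Icc 1 (k-1) ∪ {M} ∪ Finset.Icc (n+1) (n+(k-1)) := by
    have hco : ⇑(P * y) = ⇑P ∘ ⇑y := rfl
    rw [hco, ← Finset.image_image, hyimg, Finset.image_union, Finset.image_union,
      image_fix P hP3 (by omega) (k-1), ← Finset.image_union,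
      show Finset.Icc 1 (k-1) ∪ {k} = Finset.Icc 1 k by ext a; simp [Finset.mem_Icc]; omega,
      image_seg P hP1 hP2 hP3 hk1]
  have hsx : ((seg k).image ⇑x).sort (· ≤ ·) = ell k M n 0 := by
    rw [hximg]; exact sortUnion 0 hk1 hMk hMn
  have hsy : ((seg (2*k-1)).image ⇑y).sort (· ≤ ·) = ell k k n (k-1) := by
    rw [hyimg]; exact sortUnion _ hk1 le_rfl (by omega)
  have hsv : ((seg (2*k-1)).image ⇑(P * y)).sort (· ≤ ·) = ell k M n (k-1) := by
    rw [hvimg]; exact sortUnion _ hk1 hMk hMn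
  have hsrc : ∀ I : Finset ℕ, (I ⊆ seg n ∧ I.card = k ∧ domLE I ((seg k).image ⇑x)) ↔
      ∃ j, k ≤ j ∧ j ≤ M ∧ I = Finset.Icc 1 (k-1) ∪ {j} ∪ Finset.Icc (n+1) (n+0) := by
    intro I
    constructor
    · rintro ⟨hsub, hcard, hdom⟩
      have hup : List.Forall₂ (· ≤ ·) (I.sort (· ≤ ·)) (((seg k).image ⇑x).sort (· ≤ ·)) := hdom
      rw [hsx] at hup
      have hlo := lower_bnd hk1 n I
        (fun a ha => (Finset.mem_Icc.mp (hsub ha)).1) hcard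
      exact extract 0 hk1 hMk hMn I (by omega) hlo hup
    · rintro ⟨j, hj1, hj2, rfl⟩
      refine ⟨?_, ?_, ?_⟩
      · intro a ha
        simp only [Finset.mem_union, Finset.mem_Icc, Finset.mem_singleton] at ha
        simp only [seg, Finset.mem_Icc]
        omega
      · rw [cardUnion 0 hk1 hj1 (by omega)]; omega
      · show List.Forall₂ (· ≤ ·) _ (((seg k).image ⇑x).sort (· ≤ ·))
        rw [sortUnion 0 hk1 hj1 (by omega), hsx]
        exact ell_le_ell (by omega)
  have htgt : ∀ K : Finset ℕ, (K ⊆ seg (2*n-2) ∧ K.card = 2*k-1 ∧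
      domLE ((seg (2*k-1)).image ⇑y) K ∧ domLE K ((seg (2*k-1)).image ⇑(P * y))) ↔
      ∃ j, k ≤ j ∧ j ≤ M ∧ K = Finset.Icc 1 (k-1) ∪ {j} ∪ Finset.Icc (n+1) (n+(k-1)) := by
    intro K
    constructor
    · rintro ⟨hsub, hcard, hdlo, hdup⟩
      have hup : List.Forall₂ (· ≤ ·) (K.sort (· ≤ ·))
          (((seg (2*k-1)).image ⇑(P * y)).sort (· ≤ ·)) := hdup
      rw [hsv] at hup
      have hlo : List.Forall₂ (· ≤ ·) (((seg (2*k-1)).image ⇑y).sort (· ≤ ·))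
          (K.sort (· ≤ ·)) := hdlo
      rw [hsy] at hlo
      exact extract (k-1) hk1 hMk hMn K (by omega) hlo hup
    · rintro ⟨j, hj1, hj2, rfl⟩
      refine ⟨?_, ?_, ?_, ?_⟩
      · intro a ha
        simp only [Finset.mem_union, Finset.mem_Icc, Finset.mem_singleton] at ha
        simp only [seg, Finset.mem_Icc]
        omega
      · rw [cardUnion (k-1) hk1 hj1 (by omega)]; omega
      · show List.Forall₂ (· ≤ ·) (((seg (2*k-1)).image ⇑y).sort (· ≤ ·)) _
        rw [sortUnion (k-1) hk1 hj1 (by omega), hsy]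
        exact ell_le_ell (by omega)
      · show List.Forall₂ (· ≤ ·) _ (((seg (2*k-1)).image ⇑(P * y)).sort (· ≤ ·))
        rw [sortUnion (k-1) hk1 hj1 (by omega), hsv]
        exact ell_le_ell (by omega)
  refine ⟨?_, ?_, ?_⟩
  · intro I hI
    simp only [Set.mem_setOf_eq] at hI ⊢
    obtain ⟨j, hj1, hj2, rfl⟩ := (hsrc I).mp hI
    rw [map_eq hk1 hj1 (by omega)]
    exact (htgt _).mpr ⟨j, hj1, hj2, rfl⟩
  · intro I1 h1 I2 h2 heq
    simp only [Set.mem_setOf_eq] at h1 h2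
    obtain ⟨j1, hj11, hj12, rfl⟩ := (hsrc I1).mp h1
    obtain ⟨j2, hj21, hj22, rfl⟩ := (hsrc I2).mp h2
    simp only at heq
    rw [map_eq hk1 hj11 (by omega), map_eq hk1 hj21 (by omega)] at heq
    have hmem1 : j1 ∈ Finset.Icc 1 (k-1) ∪ {j1} ∪ Finset.Icc (n+1) (n+(k-1)) := by simp
    rw [heq] at hmem1
    simp only [Finset.mem_union, Finset.mem_Icc, Finset.mem_singleton] at hmem1
    have hj12' : j1 = j2 := by omega
    subst hj12'
    rfl
  · intro K hK
    simp only [Set.mem_setOf_eq] at hK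
    obtain ⟨j, hj1, hj2, rfl⟩ := (htgt K).mp hK
    refine ⟨Finset.Icc 1 (k-1) ∪ {j} ∪ Finset.Icc (n+1) (n+0),
      (hsrc _).mpr ⟨j, hj1, hj2, rfl⟩, ?_⟩
    simp only
    rw [map_eq hk1 hj1 (by omega)]

end DegSchubert
end

section
/- Let i ≥ 2, n = 2i−1, let w_0 ∈ S_n be the longest element (w_0(a) = n+1−a), and set w := w_0∘s_i ∈ S_n. (a) For every k ∈ [n−1] and every k-element subset J ⊆ [n]: J ≰ w([k]) if and only if k = i and J = [i, n]. (b) Let w_n ∈ S_{2n−2} be defined by w_n(2r) = r and w_n(2r−1) = n+r−1 for r ∈ [n−1], and let s̃_{2i−1} ∈ S_{2n−2} be the adjacent transposition (2i−1, 2i). For every k ∈ [n−1] and every (2k−1)-element subset K ⊆ [2n−2] with K ≤ w_n([2k−1]): K ≱ s̃_{2i−1}([2k−1]) if and only if k = i and K = [2i−1]. (These two equivalences constitute the combinatorial content of the identification ζ(X^a_{w_0 s_i}) = X̃^{s̃_{2i−1}}_{w_n} of the degenerate Schubert divisor with a Richardson variety in SL_{2n−2}/P for odd n.) -/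
open Finset MvPolynomial

namespace DegSchubert

lemma aux_sorted_get_add {l : List ℕ} (hl : l.Pairwise (· < ·)) :
    ∀ t (ht : t < l.length) (s : ℕ) (hst : s ≤ t),
      l.get ⟨s, lt_of_le_of_lt hst ht⟩ + (t - s) ≤ l.get ⟨t, ht⟩ := by
  intro t
  induction t with
  | zero =>
    intro ht s hst
    have hs0 : s = 0 := by omega
    subst hs0; simp
  | succ t ih =>
    intro ht s hst
    rcases Nat.lt_or_ge s (t + 1) with h | h
    · have hst' : s ≤ t := by omega
      have ht' : t < l.length := by omega
      have h1 := ih ht' s hst'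
      have h2 : l.get ⟨t, ht'⟩ < l.get ⟨t + 1, ht⟩ :=
        hl.rel_get_of_lt (by simp [Fin.lt_def])
      omega
    · have hs : s = t + 1 := by omega
      subst hs; simp

lemma aux_sort_mem {A : Finset ℕ} (t : ℕ) (ht : t < (A.sort (· ≤ ·)).length) :
    (A.sort (· ≤ ·)).get ⟨t, ht⟩ ∈ A :=
  (Finset.mem_sort _).1 (List.get_mem _ _)

lemma aux_lb {A : Finset ℕ} {c : ℕ} (hc : ∀ a ∈ A, c ≤ a) (t : ℕ)
    (ht : t < (A.sort (· ≤ ·)).length) :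
    c + t ≤ (A.sort (· ≤ ·)).get ⟨t, ht⟩ := by
  have h1 := aux_sorted_get_add (Finset.sortedLT_sort A).pairwise t ht 0 (Nat.zero_le t)
  have h2 := hc _ (aux_sort_mem 0 (show 0 < (A.sort (· ≤ ·)).length by omega))
  omega

lemma aux_ub {A : Finset ℕ} {m : ℕ} (hm : ∀ a ∈ A, a ≤ m) (t : ℕ)
    (ht : t < (A.sort (· ≤ ·)).length) :
    (A.sort (· ≤ ·)).get ⟨t, ht⟩ + ((A.sort (· ≤ ·)).length - 1 - t) ≤ m := by
  have hlast : (A.sort (· ≤ ·)).length - 1 < (A.sort (· ≤ ·)).length := by omega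
  have h1 := aux_sorted_get_add (Finset.sortedLT_sort A).pairwise _ hlast t (by omega)
  have h2 := hm _ (aux_sort_mem _ hlast)
  omega

lemma aux_zero_le {A : Finset ℕ} (h0 : 0 < (A.sort (· ≤ ·)).length) {a : ℕ} (ha : a ∈ A) :
    (A.sort (· ≤ ·)).get ⟨0, h0⟩ ≤ a := by
  obtain ⟨s, hs⟩ := List.mem_iff_get.1 ((Finset.mem_sort (· ≤ ·)).mpr ha)
  rw [← hs]
  exact (A.pairwise_sort (· ≤ ·)).rel_get_of_le (Fin.le_def.mpr (Nat.zero_le _))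

lemma aux_le_last {A : Finset ℕ} {t : ℕ} (ht : t < (A.sort (· ≤ ·)).length)
    (hl : (A.sort (· ≤ ·)).length ≤ t + 1) {a : ℕ} (ha : a ∈ A) :
    a ≤ (A.sort (· ≤ ·)).get ⟨t, ht⟩ := by
  obtain ⟨s, hs⟩ := List.mem_iff_get.1 ((Finset.mem_sort (· ≤ ·)).mpr ha)
  rw [← hs]
  exact (A.pairwise_sort (· ≤ ·)).rel_get_of_le
    (by simpa [Fin.le_def] using (show (s : ℕ) ≤ t by have := s.isLt; omega))

lemma aux_image_eq {u : Equiv.Perm ℕ} {k : ℕ} {B : Finset ℕ}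
    (hsub : ∀ a ∈ seg k, u a ∈ B) (hcard : B.card = k) :
    (seg k).image ⇑u = B := by
  have hcard' : ((seg k).image ⇑u).card = k := by
    rw [Finset.card_image_of_injective _ u.injective, seg, Nat.card_Icc]; omega
  apply Finset.eq_of_subset_of_card_le
  · intro b hb
    obtain ⟨a, ha, rfl⟩ := Finset.mem_image.1 hb
    exact hsub a ha
  · exact le_of_eq (by rw [hcard, hcard'])

/-- the combinatorics of the identification of the degenerate Schubert divisor
`X^a_{w₀ s_i}` (for `n = 2i−1`) with a Richardson variety in `SL_{2n−2}/P`. -/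
theorem stmt_19 (i : ℕ) (hi : 2 ≤ i) (n : ℕ) (hn : n = 2 * i - 1)
    (w₀ : Equiv.Perm ℕ) (hw₀ : ∀ a ∈ seg n, w₀ a = n + 1 - a)
    (hw₀fix : ∀ a, a ∉ seg n → w₀ a = a)
    (wn : Equiv.Perm ℕ) (hwn1 : ∀ r ∈ seg (n - 1), wn (2 * r) = r)
    (hwn2 : ∀ r ∈ seg (n - 1), wn (2 * r - 1) = n + r - 1) :
    (∀ k ∈ seg (n - 1), ∀ J : Finset ℕ, J ⊆ seg n → J.card = k →
      (¬ domLE J ((seg k).image ⇑(w₀ * Equiv.swap i (i + 1))) ↔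
        (k = i ∧ J = Finset.Icc i n))) ∧
    (∀ k ∈ seg (n - 1), ∀ K : Finset ℕ, K ⊆ seg (2 * n - 2) → K.card = 2 * k - 1 →
      domLE K ((seg (2 * k - 1)).image ⇑wn) →
      (¬ domLE ((seg (2 * k - 1)).image ⇑(Equiv.swap (2 * i - 1) (2 * i))) K ↔
        (k = i ∧ K = Finset.Icc 1 (2 * i - 1)))) := by
  have hn3 : 3 ≤ n := by omega
  constructor
  · -- part (a)
    intro k hk J hJsub hJcard
    simp only [seg, Finset.mem_Icc] at hk
    have hJub : ∀ a ∈ J, a ≤ n := by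
      intro a ha
      have := hJsub ha
      simp only [seg, Finset.mem_Icc] at this
      omega
    have hJlb : ∀ a ∈ J, 1 ≤ a := by
      intro a ha
      have := hJsub ha
      simp only [seg, Finset.mem_Icc] at this
      omega
    have hJlen : (J.sort (· ≤ ·)).length = k := by
      rw [Finset.length_sort, hJcard]
    by_cases hki : k = i
    · subst hki
      have hBcard : (insert (k - 1) (Finset.Icc (k + 1) n)).card = k := by
        rw [Finset.card_insert_of_notMem (by simp only [Finset.mem_Icc]; omega), Nat.card_Icc]
        omega
      have hBim : (seg k).image ⇑(w₀ * Equiv.swap k (k + 1)) =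
          insert (k - 1) (Finset.Icc (k + 1) n) := by
        apply aux_image_eq _ hBcard
        intro a ha
        simp only [seg, Finset.mem_Icc] at ha
        by_cases hai : a = k
        · rw [Equiv.Perm.mul_apply, hai, Equiv.swap_apply_left,
            hw₀ (k + 1) (by simp only [seg, Finset.mem_Icc]; omega)]
          simp only [Finset.mem_insert, Finset.mem_Icc]
          omega
        · rw [Equiv.Perm.mul_apply, Equiv.swap_apply_of_ne_of_ne hai (by omega),
            hw₀ a (by simp only [seg, Finset.mem_Icc]; omega)]
          simp only [Finset.mem_insert, Finset.mem_Icc]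
          omega
      rw [hBim]
      have hBlen : ((insert (k - 1) (Finset.Icc (k + 1) n)).sort (· ≤ ·)).length = k := by
        rw [Finset.length_sort, hBcard]
      have hBlb : ∀ a ∈ insert (k - 1) (Finset.Icc (k + 1) n), k - 1 ≤ a := by
        intro a ha
        simp only [Finset.mem_insert, Finset.mem_Icc] at ha
        omega
      constructor
      · intro hnd
        simp only [domLE, List.forall₂_iff_get] at hnd
        push_neg at hnd
        obtain ⟨t, h1, h2, hviol⟩ := hnd (by rw [hJlen, hBlen])
        refine ⟨rfl, ?_⟩
        have ht0 : t = 0 := by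
          by_contra ht
          have hub := aux_ub hJub t h1
          have hB1lt : 1 < ((insert (k - 1) (Finset.Icc (k + 1) n)).sort (· ≤ ·)).length := by
            omega
          have hg1 := aux_lb hBlb 1 hB1lt
          have hm1 := aux_sort_mem 1 hB1lt
          simp only [Finset.mem_insert, Finset.mem_Icc] at hm1
          have hsh := aux_sorted_get_add
            (Finset.sortedLT_sort (insert (k - 1) (Finset.Icc (k + 1) n))).pairwise t h2 1 (by omega)
          omega
        subst ht0
        have hlbB := aux_lb hBlb 0 h2
        have hJge : ∀ a ∈ J, k ≤ a := by
          intro a ha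
          have := aux_zero_le h1 ha
          omega
        refine Finset.eq_of_subset_of_card_le ?_ ?_
        · intro a ha
          simp only [Finset.mem_Icc]
          exact ⟨hJge a ha, hJub a ha⟩
        · rw [hJcard, Nat.card_Icc]; omega
      · rintro ⟨-, rfl⟩
        intro hd
        simp only [domLE, List.forall₂_iff_get] at hd
        have h1 : 0 < ((Finset.Icc k n).sort (· ≤ ·)).length := by
          rw [Finset.length_sort, Nat.card_Icc]; omega
        have h2 : 0 < ((insert (k - 1) (Finset.Icc (k + 1) n)).sort (· ≤ ·)).length := by
          omega
        have hgg := hd.2 0 h1 h2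
        have hlbJ := aux_lb (A := Finset.Icc k n) (c := k)
          (fun a ha => (Finset.mem_Icc.1 ha).1) 0 h1
        have hzB := aux_zero_le h2 (Finset.mem_insert_self (k - 1) (Finset.Icc (k + 1) n))
        omega
    · have hBcard : (Finset.Icc (n + 1 - k) n).card = k := by
        rw [Nat.card_Icc]; omega
      have hBim : (seg k).image ⇑(w₀ * Equiv.swap i (i + 1)) = Finset.Icc (n + 1 - k) n := by
        apply aux_image_eq _ hBcard
        intro a ha
        simp only [seg, Finset.mem_Icc] at ha ⊢
        by_cases hai : a = i
        · rw [Equiv.Perm.mul_apply, hai, Equiv.swap_apply_left,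
            hw₀ (i + 1) (by simp only [seg, Finset.mem_Icc]; omega)]
          omega
        · by_cases hai1 : a = i + 1
          · rw [Equiv.Perm.mul_apply, hai1, Equiv.swap_apply_right,
              hw₀ i (by simp only [seg, Finset.mem_Icc]; omega)]
            omega
          · rw [Equiv.Perm.mul_apply, Equiv.swap_apply_of_ne_of_ne hai hai1,
              hw₀ a (by simp only [seg, Finset.mem_Icc]; omega)]
            omega
      have hd : domLE J ((seg k).image ⇑(w₀ * Equiv.swap i (i + 1))) := by
        rw [hBim]
        simp only [domLE, List.forall₂_iff_get]
        have hBlen : ((Finset.Icc (n + 1 - k) n).sort (· ≤ ·)).length = k := by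
          rw [Finset.length_sort, hBcard]
        refine ⟨by rw [hJlen, hBlen], ?_⟩
        intro t h1 h2
        have hub := aux_ub hJub t h1
        have hlb := aux_lb (A := Finset.Icc (n + 1 - k) n) (c := n + 1 - k)
          (fun a ha => (Finset.mem_Icc.1 ha).1) t h2
        omega
      exact iff_of_false (not_not_intro hd) (fun h => hki h.1)
  · -- part (b)
    intro k hk K hKsub hKcard hKwn
    simp only [seg, Finset.mem_Icc] at hk
    have hKub : ∀ a ∈ K, a ≤ 2 * n - 2 := by
      intro a ha
      have := hKsub ha
      simp only [seg, Finset.mem_Icc] at this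
      omega
    have hKlb : ∀ a ∈ K, 1 ≤ a := by
      intro a ha
      have := hKsub ha
      simp only [seg, Finset.mem_Icc] at this
      omega
    have hKlen : (K.sort (· ≤ ·)).length = 2 * k - 1 := by
      rw [Finset.length_sort, hKcard]
    by_cases hki : k = i
    · subst hki
      have hBcard : (insert (2 * k) (Finset.Icc 1 (2 * k - 2))).card = 2 * k - 1 := by
        rw [Finset.card_insert_of_notMem (by simp only [Finset.mem_Icc]; omega), Nat.card_Icc]
        omega
      have hBim : (seg (2 * k - 1)).image ⇑(Equiv.swap (2 * k - 1) (2 * k)) =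
          insert (2 * k) (Finset.Icc 1 (2 * k - 2)) := by
        apply aux_image_eq _ hBcard
        intro a ha
        simp only [seg, Finset.mem_Icc] at ha
        by_cases hai : a = 2 * k - 1
        · rw [hai, Equiv.swap_apply_left]
          exact Finset.mem_insert_self _ _
        · rw [Equiv.swap_apply_of_ne_of_ne hai (by omega)]
          simp only [Finset.mem_insert, Finset.mem_Icc]
          omega
      rw [hBim]
      have hBlen :
          ((insert (2 * k) (Finset.Icc 1 (2 * k - 2))).sort (· ≤ ·)).length = 2 * k - 1 := by
        rw [Finset.length_sort, hBcard]
      have hBub : ∀ a ∈ insert (2 * k) (Finset.Icc 1 (2 * k - 2)), a ≤ 2 * k := by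
        intro a ha
        simp only [Finset.mem_insert, Finset.mem_Icc] at ha
        omega
      constructor
      · intro hnd
        simp only [domLE, List.forall₂_iff_get] at hnd
        push_neg at hnd
        obtain ⟨t, h1, h2, hviol⟩ := hnd (by rw [hBlen, hKlen])
        refine ⟨rfl, ?_⟩
        have htlast : t = 2 * k - 2 := by
          by_contra ht
          have hKl := aux_lb hKlb t h2
          have h3 : 2 * k - 3 <
              ((insert (2 * k) (Finset.Icc 1 (2 * k - 2))).sort (· ≤ ·)).length := by omega
          have h4 : 2 * k - 2 <
              ((insert (2 * k) (Finset.Icc 1 (2 * k - 2))).sort (· ≤ ·)).length := by omega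
          have hsh := aux_sorted_get_add
            (Finset.sortedLT_sort (insert (2 * k) (Finset.Icc 1 (2 * k - 2)))).pairwise
            (2 * k - 3) h3 t (by omega)
          have hrel :
              ((insert (2 * k) (Finset.Icc 1 (2 * k - 2))).sort (· ≤ ·)).get ⟨2 * k - 3, h3⟩ <
              ((insert (2 * k) (Finset.Icc 1 (2 * k - 2))).sort (· ≤ ·)).get ⟨2 * k - 2, h4⟩ :=
            (Finset.sortedLT_sort _).pairwise.rel_get_of_lt (by simp only [Fin.lt_def]; omega)
          have hub := aux_ub hBub (2 * k - 2) h4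
          have hm := aux_sort_mem (2 * k - 3) h3
          simp only [Finset.mem_insert, Finset.mem_Icc] at hm
          omega
        subst htlast
        have hub := aux_ub hBub (2 * k - 2) h1
        have hKle : ∀ a ∈ K, a ≤ 2 * k - 1 := by
          intro a ha
          have := aux_le_last h2 (by omega) ha
          omega
        refine Finset.eq_of_subset_of_card_le ?_ ?_
        · intro a ha
          simp only [Finset.mem_Icc]
          exact ⟨hKlb a ha, hKle a ha⟩
        · rw [hKcard, Nat.card_Icc]; omega
      · rintro ⟨-, rfl⟩
        intro hd
        simp only [domLE, List.forall₂_iff_get] at hd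
        have h1 : 2 * k - 2 <
            ((insert (2 * k) (Finset.Icc 1 (2 * k - 2))).sort (· ≤ ·)).length := by omega
        have h2 : 2 * k - 2 < ((Finset.Icc 1 (2 * k - 1)).sort (· ≤ ·)).length := by
          rw [Finset.length_sort, Nat.card_Icc]; omega
        have hgg := hd.2 (2 * k - 2) h1 h2
        have hBge := aux_le_last h1 (by omega)
          (Finset.mem_insert_self (2 * k) (Finset.Icc 1 (2 * k - 2)))
        have hKub' := aux_ub (A := Finset.Icc 1 (2 * k - 1)) (m := 2 * k - 1)
          (fun a ha => (Finset.mem_Icc.1 ha).2) (2 * k - 2) h2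
        omega
    · have hBcard : (Finset.Icc 1 (2 * k - 1)).card = 2 * k - 1 := by
        rw [Nat.card_Icc]; omega
      have hBim : (seg (2 * k - 1)).image ⇑(Equiv.swap (2 * i - 1) (2 * i)) =
          Finset.Icc 1 (2 * k - 1) := by
        apply aux_image_eq _ hBcard
        intro a ha
        simp only [seg, Finset.mem_Icc] at ha ⊢
        by_cases h1 : a = 2 * i - 1
        · rw [h1, Equiv.swap_apply_left]; omega
        · by_cases h2 : a = 2 * i
          · rw [h2, Equiv.swap_apply_right]; omega
          · rw [Equiv.swap_apply_of_ne_of_ne h1 h2]; omega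
      have hd : domLE ((seg (2 * k - 1)).image ⇑(Equiv.swap (2 * i - 1) (2 * i))) K := by
        rw [hBim]
        simp only [domLE, List.forall₂_iff_get]
        have hBlen : ((Finset.Icc 1 (2 * k - 1)).sort (· ≤ ·)).length = 2 * k - 1 := by
          rw [Finset.length_sort, hBcard]
        refine ⟨by rw [hBlen, hKlen], ?_⟩
        intro t h1 h2
        have hub := aux_ub (A := Finset.Icc 1 (2 * k - 1)) (m := 2 * k - 1)
          (fun a ha => (Finset.mem_Icc.1 ha).2) t h1
        have hlb := aux_lb hKlb t h2
        omega
      exact iff_of_false (not_not_intro hd) (fun h => hki h.1)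


end DegSchubert
end
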